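/- arXiv:2006.04920 — 3 statements merged into one kernel-verified Lean document; each statement's English description precedes it below -/
import Mathlib

section
/- For the interval-censored AFT loss with the logistic distribution and 0 < y̲ < ȳ, the minimizer over u of ℓ(u) = −ln(F_Z(s(ȳ)) − F_Z(s(y̲))) is u* = (ln y̲ + ln ȳ)/2, the midpoint of the log bounds. -/
theorem stmt_17 (σ yl yu : ℝ) (hσ : 0 < σ) (hyl : 0 < yl) (hlu : yl < yu)
    (FZ : ℝ → ℝ) (hFZ : ∀ z, FZ z = Real.exp z / (1 + Real.exp z))
    (ℓ : ℝ → ℝ)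
    (hℓ : ∀ u, ℓ u =
      -Real.log (FZ ((Real.log yu - u) / σ) - FZ ((Real.log yl - u) / σ))) :
    ∀ u : ℝ, u ≠ (Real.log yl + Real.log yu) / 2 →
      ℓ ((Real.log yl + Real.log yu) / 2) < ℓ u := by
  intro u hu
  set a := Real.log yl with hA
  set b := Real.log yu with hB
  have hab : a < b := Real.log_lt_log hyl hlu
  set m := (a + b) / 2 with hm
  set E := Real.exp ((b - a) / (2 * σ)) with hEdef
  have hE0 : 0 < E := Real.exp_pos _
  have hE1 : 1 < E := by
    rw [hEdef, show (1:ℝ) = Real.exp 0 by simp]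
    exact Real.exp_lt_exp.mpr (div_pos (by linarith) (by linarith))
  set t := Real.exp ((m - u) / σ) with htdef
  have ht0 : 0 < t := Real.exp_pos _
  have ht1 : t ≠ 1 := by
    rw [htdef, ← Real.exp_zero]
    intro h
    have h0 := Real.exp_injective h
    have h1 : m - u = 0 := by
      field_simp [ne_of_gt hσ] at h0
      linarith
    exact hu (by linarith)
  have hbu : Real.exp ((b - u) / σ) = t * E := by
    rw [htdef, hEdef, ← Real.exp_add]
    congr 1
    field_simp [hm]
    ring
  have hau : Real.exp ((a - u) / σ) = t / E := by
    rw [htdef, hEdef, ← Real.exp_sub]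
    congr 1
    field_simp [hm]
    ring
  have hbm : Real.exp ((b - m) / σ) = E := by
    rw [hEdef]
    congr 1
    field_simp [hm]
    ring
  have ham : Real.exp ((a - m) / σ) = 1 / E := by
    rw [hEdef, one_div, ← Real.exp_neg]
    congr 1
    field_simp [hm]
    ring
  have h1 : (0:ℝ) < 1 + t * E := by positivity
  have h2 : (0:ℝ) < 1 + t / E := by positivity
  have h3 : (0:ℝ) < 1 + E := by positivity
  have h4 : (0:ℝ) < 1 + 1 / E := by positivity
  have hgpos : 0 < t * E / (1 + t * E) - (t / E) / (1 + t / E) := by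
    rw [sub_pos, div_lt_div_iff₀ h2 h1]
    have hEne : E ≠ 0 := ne_of_gt hE0
    have e1 : t / E * (1 + t * E) = t / E + t * t := by field_simp
    have e2 : t * E * (1 + t / E) = t * E + t * t := by field_simp
    rw [e1, e2]
    have : t / E < t * E := by
      rw [div_lt_iff₀ hE0]
      nlinarith [mul_pos (mul_pos ht0 (sub_pos.mpr hE1)) (show (0:ℝ) < E + 1 by linarith)]
    linarith
  have htsq : 0 < (t - 1) ^ 2 := by
    have : t - 1 ≠ 0 := sub_ne_zero_of_ne ht1
    positivity
  have key : t * E / (1 + t * E) - (t / E) / (1 + t / E)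
      < E / (1 + E) - (1 / E) / (1 + 1 / E) := by
    rw [div_sub_div _ _ (ne_of_gt h1) (ne_of_gt h2),
        div_sub_div _ _ (ne_of_gt h3) (ne_of_gt h4),
        div_lt_div_iff₀ (by positivity) (by positivity)]
    have hEne : E ≠ 0 := ne_of_gt hE0
    have hc : 0 < E * E - 1 := by nlinarith
    have hfact : 0 < (E * E - 1) * (t - 1) ^ 2 := mul_pos hc htsq
    field_simp
    nlinarith [mul_pos hc (mul_pos hE0 htsq), mul_pos hE0 hE0, ht0]
  have hgpos' : 0 < E / (1 + E) - (1 / E) / (1 + 1 / E) := lt_trans hgpos key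
  rw [hℓ, hℓ, hFZ, hFZ, hFZ, hFZ, hbu, hau, hbm, ham]
  exact neg_lt_neg (Real.log_lt_log hgpos key)
end

section
/- The interval-censored AFT loss ℓ(u) = −ln(F_Z(s(ȳ)) − F_Z(s(y̲))) with the logistic CDF satisfies lim_{u→−∞} ℓ'(u) = −1/σ and lim_{u→+∞} ℓ'(u) = 1/σ; in particular ℓ has globally bounded gradient in u. -/
open Filter

theorem stmt_18 (σ yl yu : ℝ) (hσ : 0 < σ) (hyl : 0 < yl) (hlu : yl < yu)
    (FZ fZ : ℝ → ℝ)
    (hFZ : ∀ z, FZ z = Real.exp z / (1 + Real.exp z))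
    (hfZ : ∀ z, fZ z = deriv FZ z)
    (ℓ' : ℝ → ℝ)
    (hℓ' : ∀ u, ℓ' u =
      (fZ ((Real.log yu - u) / σ) - fZ ((Real.log yl - u) / σ)) /
        (σ * (FZ ((Real.log yu - u) / σ) - FZ ((Real.log yl - u) / σ)))) :
    Tendsto ℓ' atBot (nhds (-1 / σ)) ∧
    Tendsto ℓ' atTop (nhds (1 / σ)) ∧
    ∃ M : ℝ, ∀ u : ℝ, |ℓ' u| ≤ M := by
  have hpos : ∀ z : ℝ, (0:ℝ) < 1 + Real.exp z := fun z => by positivity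
  -- derivative of FZ
  have hfZ' : ∀ z, fZ z = Real.exp z / (1 + Real.exp z) ^ 2 := by
    intro z
    rw [hfZ]
    have hFZeq : FZ = fun z => Real.exp z / (1 + Real.exp z) := funext hFZ
    have hd : HasDerivAt (fun z => Real.exp z / (1 + Real.exp z))
        ((Real.exp z * (1 + Real.exp z) - Real.exp z * Real.exp z) / (1 + Real.exp z) ^ 2) z := by
      have := (Real.hasDerivAt_exp z).div ((hasDerivAt_const z 1).add (Real.hasDerivAt_exp z))
        (ne_of_gt (hpos z))
      simp only [zero_add] at this
      exact this
    rw [hFZeq, hd.deriv]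
    have h := hpos z
    field_simp
    ring
  have hlog : Real.log yl < Real.log yu := Real.log_lt_log hyl hlu
  -- key simplification
  have key : ∀ u, ℓ' u =
      (1 - Real.exp ((Real.log yu - u) / σ) * Real.exp ((Real.log yl - u) / σ)) /
        (σ * ((1 + Real.exp ((Real.log yu - u) / σ)) * (1 + Real.exp ((Real.log yl - u) / σ)))) := by
    intro u
    have hab : (Real.log yl - u) / σ < (Real.log yu - u) / σ :=
      (div_lt_div_iff_of_pos_right hσ).mpr (by linarith)
    set A := Real.exp ((Real.log yu - u) / σ) with hA
    set B := Real.exp ((Real.log yl - u) / σ) with hB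
    have hBA : B < A := Real.exp_lt_exp.mpr hab
    have hA1 : (0:ℝ) < 1 + A := hpos _
    have hB1 : (0:ℝ) < 1 + B := hpos _
    have hD : FZ ((Real.log yu - u) / σ) - FZ ((Real.log yl - u) / σ)
        = (A - B) / ((1 + A) * (1 + B)) := by
      rw [hFZ, hFZ]
      field_simp
      ring
    rw [hℓ', hfZ', hfZ', hD]
    have hABne : A - B ≠ 0 := by linarith
    field_simp
    ring
  -- version suited for u → -∞
  have key2 : ∀ u, ℓ' u =
      (Real.exp ((u - Real.log yu) / σ) * Real.exp ((u - Real.log yl) / σ) - 1) /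
        (σ * ((Real.exp ((u - Real.log yu) / σ) + 1) * (Real.exp ((u - Real.log yl) / σ) + 1))) := by
    intro u
    rw [key u]
    have e1 : Real.exp ((u - Real.log yu) / σ) = (Real.exp ((Real.log yu - u) / σ))⁻¹ := by
      rw [← Real.exp_neg]; ring_nf
    have e2 : Real.exp ((u - Real.log yl) / σ) = (Real.exp ((Real.log yl - u) / σ))⁻¹ := by
      rw [← Real.exp_neg]; ring_nf
    rw [e1, e2]
    have h1 := Real.exp_ne_zero ((Real.log yu - u) / σ)
    have h2 := Real.exp_ne_zero ((Real.log yl - u) / σ)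
    rw [div_eq_div_iff]
    · field_simp
      try ring
    · positivity
    · positivity
  -- basic limits of the exponential pieces
  have texp : ∀ c : ℝ, Tendsto (fun u => Real.exp ((c - u) / σ)) atTop (nhds 0) := by
    intro c
    apply Real.tendsto_exp_atBot.comp
    apply Tendsto.atBot_div_const hσ
    exact tendsto_atBot_add_const_left _ c tendsto_neg_atTop_atBot
  have texp' : ∀ c : ℝ, Tendsto (fun u => Real.exp ((u - c) / σ)) atBot (nhds 0) := by
    intro c
    apply Real.tendsto_exp_atBot.comp
    apply Tendsto.atBot_div_const hσ
    exact tendsto_atBot_add_const_right _ (-c) tendsto_id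
  refine ⟨?_, ?_, ?_⟩
  · -- u → -∞
    rw [tendsto_congr key2]
    have hU := texp' (Real.log yu)
    have hL := texp' (Real.log yl)
    have : Tendsto (fun u =>
        (Real.exp ((u - Real.log yu) / σ) * Real.exp ((u - Real.log yl) / σ) - 1) /
        (σ * ((Real.exp ((u - Real.log yu) / σ) + 1) * (Real.exp ((u - Real.log yl) / σ) + 1))))
        atBot (nhds ((0 * 0 - 1) / (σ * ((0 + 1) * (0 + 1))))) := by
      exact Tendsto.div ((hU.mul hL).sub tendsto_const_nhds)
        (tendsto_const_nhds.mul (((hU.add tendsto_const_nhds).mul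
          (hL.add tendsto_const_nhds)))) (by simp; positivity)
    convert this using 2
    norm_num
  · -- u → +∞
    rw [tendsto_congr key]
    have hU := texp (Real.log yu)
    have hL := texp (Real.log yl)
    have : Tendsto (fun u =>
        (1 - Real.exp ((Real.log yu - u) / σ) * Real.exp ((Real.log yl - u) / σ)) /
        (σ * ((1 + Real.exp ((Real.log yu - u) / σ)) * (1 + Real.exp ((Real.log yl - u) / σ)))))
        atTop (nhds ((1 - 0 * 0) / (σ * ((1 + 0) * (1 + 0))))) := by
      exact Tendsto.div (tendsto_const_nhds.sub (hU.mul hL))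
        (tendsto_const_nhds.mul (((tendsto_const_nhds.add hU).mul
          (tendsto_const_nhds.add hL)))) (by simp; positivity)
    convert this using 2
    norm_num
  · -- bounded by 1/σ
    refine ⟨1 / σ, fun u => ?_⟩
    rw [key u]
    set A := Real.exp ((Real.log yu - u) / σ) with hA
    set B := Real.exp ((Real.log yl - u) / σ) with hB
    have hA0 : 0 < A := Real.exp_pos _
    have hB0 : 0 < B := Real.exp_pos _
    rw [abs_div, abs_of_pos (by positivity : (0:ℝ) < σ * ((1 + A) * (1 + B)))]
    rw [div_le_div_iff₀ (by positivity) hσ]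
    have habs : |1 - A * B| ≤ 1 + A * B := by
      rw [abs_le]
      constructor <;> nlinarith
    nlinarith [mul_pos hA0 hB0]
end

section
/- For the normal-distribution AFT model, the interval-censored gradient (f_Z(s(ȳ)) − f_Z(s(y̲)))/(σ(F_Z(s(ȳ)) − F_Z(s(y̲)))) tends to +∞ as u → +∞ and to −∞ as u → −∞, where f_Z and F_Z are the standard normal PDF and CDF and 0 < y̲ < ȳ. -/
open Filter MeasureTheory Set Real

noncomputable def phiN (z : ℝ) : ℝ := Real.exp (-z ^ 2 / 2) / Real.sqrt (2 * Real.pi)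
noncomputable def PhiN (z : ℝ) : ℝ := ∫ t in Set.Iic z, phiN t

lemma phiN_pos (z : ℝ) : 0 < phiN z :=
  div_pos (Real.exp_pos _) (Real.sqrt_pos.2 (by positivity))

lemma phiN_neg (z : ℝ) : phiN (-z) = phiN z := by simp [phiN]

lemma phiN_integrable : Integrable phiN := by
  have h := (integrable_exp_neg_mul_sq (by norm_num : (0:ℝ) < 1/2)).div_const
    (Real.sqrt (2 * Real.pi))
  refine h.congr (Filter.Eventually.of_forall fun z => ?_)
  rw [phiN, show -z ^ 2 / 2 = -(1/2) * z ^ 2 by ring]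

lemma phiN_mul (x y : ℝ) : phiN x = phiN y * Real.exp ((y ^ 2 - x ^ 2) / 2) := by
  rw [phiN, phiN, div_mul_eq_mul_div, ← Real.exp_add]
  ring_nf

lemma integral_exp_neg_mul_Ioi {b : ℝ} (hb : 0 < b) :
    ∫ t in Set.Ioi b, Real.exp (-b * t) = Real.exp (-b * b) / b := by
  have hderiv : ∀ t ∈ Set.Ici b, HasDerivAt (fun t => -Real.exp (-b * t) / b)
      (Real.exp (-b * t)) t := by
    intro t _
    have h1 : HasDerivAt (fun t : ℝ => -b * t) (-b) t := by
      simpa using (hasDerivAt_id t).const_mul (-b)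
    have h2 := (h1.exp.neg).div_const b
    exact h2.congr_deriv (by rw [div_eq_iff hb.ne']; ring)
  have htend : Tendsto (fun t => -Real.exp (-b * t) / b) atTop (nhds 0) := by
    have h3 : Tendsto (fun t : ℝ => -b * t) atTop atBot :=
      tendsto_id.const_mul_atTop_of_neg (neg_neg_iff_pos.2 hb)
    have := ((Real.tendsto_exp_atBot.comp h3).neg).div_const b
    simpa using this
  have := integral_Ioi_of_hasDerivAt_of_tendsto' hderiv (exp_neg_integrableOn_Ioi b hb) htend
  rw [this]
  ring

lemma tail_le {b : ℝ} (hb : 0 < b) : ∫ t in Set.Ioi b, phiN t ≤ phiN b / b := by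
  have hmono : ∫ t in Set.Ioi b, phiN t ≤
      ∫ t in Set.Ioi b, (phiN b * Real.exp (b * b)) * Real.exp (-b * t) := by
    apply setIntegral_mono_on phiN_integrable.integrableOn
      (((exp_neg_integrableOn_Ioi b hb).const_mul _)) measurableSet_Ioi
    intro t ht
    rw [phiN_mul t b, mul_assoc, ← Real.exp_add]
    have hle : (b ^ 2 - t ^ 2) / 2 ≤ b * b + -b * t := by nlinarith [sq_nonneg (t - b)]
    exact mul_le_mul_of_nonneg_left (Real.exp_le_exp.2 hle) (phiN_pos b).le
  calc ∫ t in Set.Ioi b, phiN t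
      ≤ ∫ t in Set.Ioi b, (phiN b * Real.exp (b * b)) * Real.exp (-b * t) := hmono
    _ = (phiN b * Real.exp (b * b)) * (Real.exp (-b * b) / b) := by
        rw [integral_const_mul, integral_exp_neg_mul_Ioi hb]
    _ = phiN b / b := by
        rw [mul_assoc, mul_comm (Real.exp (b*b)), div_mul_eq_mul_div, ← Real.exp_add]
        simp [div_eq_div_iff]
        ring
  
lemma PhiN_eq_tail (z : ℝ) : PhiN z = ∫ t in Set.Ioi (-z), phiN t := by
  rw [PhiN, ← neg_neg z, ← integral_comp_neg_Ioi]
  simp [phiN_neg]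

lemma PhiN_nonneg (z : ℝ) : 0 ≤ PhiN z :=
  setIntegral_nonneg measurableSet_Iic fun t _ => (phiN_pos t).le

lemma PhiN_sub {a b : ℝ} (hab : a ≤ b) :
    PhiN b - PhiN a = ∫ t in Set.Ioc a b, phiN t := by
  rw [PhiN, PhiN, intervalIntegral.integral_Iic_sub_Iic phiN_integrable.integrableOn
    phiN_integrable.integrableOn, intervalIntegral.integral_of_le hab]

lemma PhiN_sub_pos {a b : ℝ} (hab : a < b) : 0 < PhiN b - PhiN a := by
  rw [PhiN_sub hab.le]
  rw [setIntegral_pos_iff_support_of_nonneg_ae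
    (Filter.Eventually.of_forall fun t => (phiN_pos t).le) phiN_integrable.integrableOn]
  have hsupp : Function.support phiN ∩ Set.Ioc a b = Set.Ioc a b := by
    ext t; simp [Function.mem_support, (phiN_pos t).ne']
  rw [hsupp, Real.volume_Ioc]
  exact ENNReal.ofReal_pos.2 (by linarith)

lemma PhiN_le_tail {z : ℝ} (hz : z < 0) : PhiN z ≤ phiN z / (-z) := by
  rw [PhiN_eq_tail, ← phiN_neg z]
  exact tail_le (by linarith)

lemma grad_lower {σ d α : ℝ} (hσ : 0 < σ) (hd : 0 < d) (hα1 : α ≤ -1)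
    (hα2 : d * (2 * α - d) / 2 ≤ -Real.log 2) :
    (-α) / (2 * σ) ≤ (phiN α - phiN (α - d)) / (σ * (PhiN α - PhiN (α - d))) := by
  set A := phiN α with hA
  set B := phiN (α - d) with hB
  set D := PhiN α - PhiN (α - d) with hDdef
  have hApos : 0 < A := phiN_pos α
  have hD : 0 < D := PhiN_sub_pos (by linarith)
  have hBle : B ≤ A / 2 := by
    have := phiN_mul (α - d) α
    rw [show (α ^ 2 - (α - d) ^ 2) / 2 = d * (2 * α - d) / 2 by ring] at this
    have hexp : Real.exp (d * (2 * α - d) / 2) ≤ 1 / 2 := by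
      calc Real.exp (d * (2 * α - d) / 2) ≤ Real.exp (-Real.log 2) := Real.exp_le_exp.2 hα2
        _ = 1 / 2 := by rw [Real.exp_neg, Real.exp_log (by norm_num)]; norm_num
    calc B = A * Real.exp (d * (2 * α - d) / 2) := this
      _ ≤ A * (1 / 2) := mul_le_mul_of_nonneg_left hexp hApos.le
      _ = A / 2 := by ring
  have hN : A / 2 ≤ A - B := by linarith
  have hDle : (-α) * D ≤ A := by
    have h1 : D ≤ PhiN α := by
      have := PhiN_nonneg (α - d); linarith
    have h2 : PhiN α ≤ A / (-α) := PhiN_le_tail (by linarith)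
    have h3 : D ≤ A / (-α) := h1.trans h2
    calc (-α) * D ≤ (-α) * (A / (-α)) :=
          mul_le_mul_of_nonneg_left h3 (by linarith)
      _ = A := mul_div_cancel₀ A (by intro h; rw [show α = -(-α) by ring, h] at hα1; norm_num at hα1)
  rw [div_le_div_iff₀ (by linarith) (by positivity)]
  nlinarith [mul_pos hσ hD]

lemma grad_upper {σ d β : ℝ} (hσ : 0 < σ) (hd : 0 < d) (hβ1 : 1 ≤ β)
    (hβ2 : Real.log 2 ≤ d * (2 * β + d) / 2) :
    (phiN (β + d) - phiN β) / (σ * (PhiN (β + d) - PhiN β)) ≤ (-β) / (2 * σ) := by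
  set A := phiN (β + d) with hA
  set B := phiN β with hB
  set D := PhiN (β + d) - PhiN β with hDdef
  have hBpos : 0 < B := phiN_pos β
  have hβ0 : (0:ℝ) < β := by linarith
  have hD : 0 < D := PhiN_sub_pos (by linarith)
  have hAle : A ≤ B / 2 := by
    have := phiN_mul (β + d) β
    rw [show (β ^ 2 - (β + d) ^ 2) / 2 = -(d * (2 * β + d) / 2) by ring] at this
    have hexp : Real.exp (-(d * (2 * β + d) / 2)) ≤ 1 / 2 := by
      calc Real.exp (-(d * (2 * β + d) / 2)) ≤ Real.exp (-Real.log 2) :=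
            Real.exp_le_exp.2 (by linarith)
        _ = 1 / 2 := by rw [Real.exp_neg, Real.exp_log (by norm_num)]; norm_num
    calc A = B * Real.exp (-(d * (2 * β + d) / 2)) := this
      _ ≤ B * (1 / 2) := mul_le_mul_of_nonneg_left hexp hBpos.le
      _ = B / 2 := by ring
  have hN : A - B ≤ -(B / 2) := by linarith
  have hDle : β * D ≤ B := by
    have h1 : D ≤ ∫ t in Set.Ioi β, phiN t := by
      rw [hDdef, PhiN_sub (by linarith : β ≤ β + d)]
      exact setIntegral_mono_set phiN_integrable.integrableOn
        (Filter.Eventually.of_forall fun t => (phiN_pos t).le)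
        (HasSubset.Subset.eventuallyLE Set.Ioc_subset_Ioi_self)
    have h2 : (∫ t in Set.Ioi β, phiN t) ≤ B / β := tail_le hβ0
    have h3 : D ≤ B / β := h1.trans h2
    calc β * D ≤ β * (B / β) := mul_le_mul_of_nonneg_left h3 hβ0.le
      _ = B := by field_simp
  rw [div_le_div_iff₀ (by positivity) (by linarith)]
  nlinarith [mul_pos hσ hD]

theorem stmt_19 (σ yl yu : ℝ) (hσ : 0 < σ) (hyl : 0 < yl) (hlu : yl < yu)
    (fZ FZ : ℝ → ℝ)
    (hfZ : ∀ z, fZ z = Real.exp (-z ^ 2 / 2) / Real.sqrt (2 * Real.pi))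
    (hFZ : ∀ z, FZ z = ∫ t in Set.Iic z, fZ t) :
    Tendsto (fun u => (fZ ((Real.log yu - u) / σ) - fZ ((Real.log yl - u) / σ)) /
        (σ * (FZ ((Real.log yu - u) / σ) - FZ ((Real.log yl - u) / σ)))) atTop atTop ∧
    Tendsto (fun u => (fZ ((Real.log yu - u) / σ) - fZ ((Real.log yl - u) / σ)) /
        (σ * (FZ ((Real.log yu - u) / σ) - FZ ((Real.log yl - u) / σ)))) atBot atBot := by
  have hfZ' : fZ = phiN := funext fun z => by rw [hfZ, phiN]
  subst hfZ'
  have hFZ' : FZ = PhiN := funext fun z => by rw [hFZ, PhiN]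
  subst hFZ'
  set a := Real.log yl with ha
  set b := Real.log yu with hb
  have hab : a < b := Real.log_lt_log hyl hlu
  set d := (b - a) / σ with hd'
  have hd : 0 < d := div_pos (sub_pos.2 hab) hσ
  have hba : ∀ u : ℝ, (a - u) / σ = (b - u) / σ - d := by
    intro u; rw [hd']; field_simp; ring
  constructor
  · -- u → +∞
    have hα : Tendsto (fun u => (b - u) / σ) atTop atBot := by
      have h0 : Tendsto (fun u : ℝ => b - u) atTop atBot := by
        simpa [sub_eq_add_neg] using tendsto_atBot_add_const_left atTop b tendsto_neg_atTop_atBot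
      exact h0.atBot_div_const hσ
    have hlin : Tendsto (fun u => -((b - u) / σ) / (2 * σ)) atTop atTop :=
      (tendsto_neg_atBot_atTop.comp hα).atTop_div_const (by positivity)
    have hcondt : Tendsto (fun u => d * (2 * ((b - u) / σ) - d) / 2) atTop atBot := by
      have h1 : Tendsto (fun u => 2 * ((b - u) / σ)) atTop atBot :=
        hα.const_mul_atBot two_pos
      have h2 : Tendsto (fun u => 2 * ((b - u) / σ) + -d) atTop atBot :=
        tendsto_atBot_add_const_right atTop (-d) h1
      have h3 : Tendsto (fun u => (d / 2) * (2 * ((b - u) / σ) + -d)) atTop atBot :=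
        h2.const_mul_atBot (by positivity)
      exact h3.congr fun u => by ring
    refine tendsto_atTop_mono' atTop ?_ hlin
    filter_upwards [hα.eventually (eventually_le_atBot (-1)),
      hcondt.eventually (eventually_le_atBot (-Real.log 2))] with u h1 h2
    rw [hba u]
    exact grad_lower hσ hd h1 h2
  · -- u → -∞
    have hβ : Tendsto (fun u => (a - u) / σ) atBot atTop := by
      have h0 : Tendsto (fun u : ℝ => a - u) atBot atTop := by
        simpa [sub_eq_add_neg] using tendsto_atTop_add_const_left atBot a tendsto_neg_atBot_atTop
      exact h0.atTop_div_const hσ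
    have hab' : ∀ u : ℝ, (b - u) / σ = (a - u) / σ + d := by
      intro u; rw [hd']; field_simp; ring
    have hlin : Tendsto (fun u => -((a - u) / σ) / (2 * σ)) atBot atBot :=
      (tendsto_neg_atTop_atBot.comp hβ).atBot_div_const (by positivity)
    have hcondt : Tendsto (fun u => d * (2 * ((a - u) / σ) + d) / 2) atBot atTop := by
      have h1 : Tendsto (fun u => 2 * ((a - u) / σ)) atBot atTop :=
        hβ.const_mul_atTop two_pos
      have h2 : Tendsto (fun u => 2 * ((a - u) / σ) + d) atBot atTop :=
        tendsto_atTop_add_const_right atBot d h1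
      have h3 : Tendsto (fun u => (d / 2) * (2 * ((a - u) / σ) + d)) atBot atTop :=
        h2.const_mul_atTop (by positivity)
      exact h3.congr fun u => by ring
    refine tendsto_atBot_mono' atBot ?_ hlin
    filter_upwards [hβ.eventually (eventually_ge_atTop 1),
      hcondt.eventually (eventually_ge_atTop (Real.log 2))] with u h1 h2
    rw [hab' u]
    exact grad_upper hσ hd h1 h2
end
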